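/- For every fixed γ ∈ [0,1], the function p ↦ E_0(p,γ) is differentiable at p = 0 with derivative ∂E_0(p,γ)/∂p |_{p=0} = (γ/ln 2)·(1 − Σ_{y∈𝒴} P(y|0)^{γ/(1+γ)}·P(y|1)^{1/(1+γ)}), and this derivative is nonnegative. -/

import Mathlib

open Finset

/-- Gallager-type function
`E_0(p,γ) = −log₂ Σ_y P(y|0)^{1/(1+γ)}·[(1−p)·P(y|0)^{1/(1+γ)} + p·P(y|1)^{1/(1+γ)}]^γ`. -/
noncomputable def gallagerE0 {𝒴 : Type} [Fintype 𝒴] (P : ZMod 2 → 𝒴 → ℝ)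
    (p γ : ℝ) : ℝ :=
  -Real.logb 2 (∑ y : 𝒴, P 0 y ^ ((1 : ℝ) / (1 + γ)) *
    ((1 - p) * P 0 y ^ ((1 : ℝ) / (1 + γ)) + p * P 1 y ^ ((1 : ℝ) / (1 + γ))) ^ γ)

/-- For every fixed `γ ∈ [0,1]`, the function `p ↦ E_0(p,γ)` is differentiable at
`p = 0` with derivative
`(γ/ln 2)·(1 − Σ_y P(y|0)^{γ/(1+γ)}·P(y|1)^{1/(1+γ)})`, and this derivative is
nonnegative. -/
theorem gallagerE0_deriv_at_zero
    (𝒴 : Type) [Fintype 𝒴]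
    (P : ZMod 2 → 𝒴 → ℝ)
    (hPpos : ∀ x y, 0 < P x y) (hPsum : ∀ x, ∑ y : 𝒴, P x y = 1)
    (γ : ℝ) (hγ0 : 0 ≤ γ) (hγ1 : γ ≤ 1) :
    HasDerivAt (fun p => gallagerE0 P p γ)
      (γ / Real.log 2 *
        (1 - ∑ y : 𝒴, P 0 y ^ (γ / (1 + γ)) * P 1 y ^ ((1 : ℝ) / (1 + γ)))) 0 ∧
    0 ≤ γ / Real.log 2 *
        (1 - ∑ y : 𝒴, P 0 y ^ (γ / (1 + γ)) * P 1 y ^ ((1 : ℝ) / (1 + γ))) := by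
  have h1γ : (0:ℝ) < 1 + γ := by linarith
  set θ : ℝ := (1:ℝ) / (1 + γ) with hθ
  have hθpos : 0 < θ := by positivity
  set f : ℝ → ℝ := fun p => ∑ y : 𝒴, P 0 y ^ θ *
    ((1 - p) * P 0 y ^ θ + p * P 1 y ^ θ) ^ γ with hf
  have ha : ∀ y : 𝒴, (0:ℝ) < P 0 y ^ θ := fun y => Real.rpow_pos_of_pos (hPpos 0 y) θ
  have hc : ∀ y : 𝒴, (0:ℝ) < P 1 y ^ θ := fun y => Real.rpow_pos_of_pos (hPpos 1 y) θ
  -- value at 0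
  have hterm0 : ∀ y : 𝒴, P 0 y ^ θ * ((1 - (0:ℝ)) * P 0 y ^ θ + 0 * P 1 y ^ θ) ^ γ
      = P 0 y := by
    intro y
    have h0 := (hPpos 0 y).le
    rw [sub_zero, one_mul, zero_mul, add_zero, ← Real.rpow_mul h0,
      ← Real.rpow_add (hPpos 0 y),
      show θ + θ * γ = 1 by rw [hθ]; field_simp, Real.rpow_one]
  have hf0 : f 0 = 1 := by
    rw [hf]
    simp only
    rw [Finset.sum_congr rfl (fun y _ => hterm0 y), hPsum 0]
  -- derivative of f at 0
  have hfd : HasDerivAt f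
      (∑ y : 𝒴, P 0 y ^ θ *
        ((P 1 y ^ θ - P 0 y ^ θ) * γ *
          ((1 - (0:ℝ)) * P 0 y ^ θ + 0 * P 1 y ^ θ) ^ (γ - 1))) 0 := by
    apply HasDerivAt.fun_sum
    intro y _
    have hinner : HasDerivAt (fun p : ℝ => (1 - p) * P 0 y ^ θ + p * P 1 y ^ θ)
        (P 1 y ^ θ - P 0 y ^ θ) 0 := by
      have h1 : HasDerivAt (fun p : ℝ => (1 - p) * P 0 y ^ θ + p * P 1 y ^ θ)
          ((-1) * P 0 y ^ θ + 1 * P 1 y ^ θ) 0 :=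
        (((hasDerivAt_id (0:ℝ)).const_sub 1).mul_const _).add
          ((hasDerivAt_id (0:ℝ)).mul_const _)
      convert h1 using 1; ring
    have hne : (1 - (0:ℝ)) * P 0 y ^ θ + 0 * P 1 y ^ θ ≠ 0 := by
      have := ha y; simp; positivity
    exact (hinner.rpow_const (Or.inl hne)).const_mul _
  -- simplify derivative value
  have hderivval : (∑ y : 𝒴, P 0 y ^ θ *
        ((P 1 y ^ θ - P 0 y ^ θ) * γ *
          ((1 - (0:ℝ)) * P 0 y ^ θ + 0 * P 1 y ^ θ) ^ (γ - 1)))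
      = γ * ((∑ y : 𝒴, P 0 y ^ (γ / (1 + γ)) * P 1 y ^ θ) - 1) := by
    have key : ∀ y : 𝒴, P 0 y ^ θ *
        ((P 1 y ^ θ - P 0 y ^ θ) * γ *
          ((1 - (0:ℝ)) * P 0 y ^ θ + 0 * P 1 y ^ θ) ^ (γ - 1))
        = γ * (P 0 y ^ (γ / (1 + γ)) * P 1 y ^ θ) - γ * P 0 y := by
      intro y
      have h0 := (hPpos 0 y).le
      rw [sub_zero, one_mul, zero_mul, add_zero]
      have hpow1 : P 0 y ^ θ * (P 0 y ^ θ) ^ (γ - 1) = P 0 y ^ (γ / (1 + γ)) := by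
        rw [← Real.rpow_mul h0, ← Real.rpow_add (hPpos 0 y)]
        congr 1
        rw [hθ]; field_simp; ring
      have hpow2 : P 0 y ^ θ * P 0 y ^ (γ / (1 + γ)) = P 0 y := by
        rw [← Real.rpow_add (hPpos 0 y),
          show θ + γ / (1 + γ) = 1 by
            rw [hθ, ← add_div, div_self h1γ.ne'], Real.rpow_one]
      calc P 0 y ^ θ * ((P 1 y ^ θ - P 0 y ^ θ) * γ * (P 0 y ^ θ) ^ (γ - 1))
          = γ * ((P 0 y ^ θ * (P 0 y ^ θ) ^ (γ - 1)) * P 1 y ^ θ)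
              - γ * (P 0 y ^ θ * (P 0 y ^ θ * (P 0 y ^ θ) ^ (γ - 1))) := by ring
        _ = γ * (P 0 y ^ (γ / (1 + γ)) * P 1 y ^ θ) - γ * P 0 y := by
              rw [hpow1, hpow2]
    rw [Finset.sum_congr rfl (fun y _ => key y), Finset.sum_sub_distrib,
      ← Finset.mul_sum, ← Finset.mul_sum, hPsum 0]
    ring
  -- assemble derivative of E0
  have hE : HasDerivAt (fun p => gallagerE0 P p γ)
      (γ / Real.log 2 *
        (1 - ∑ y : 𝒴, P 0 y ^ (γ / (1 + γ)) * P 1 y ^ ((1 : ℝ) / (1 + γ)))) 0 := by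
    have hfne : f 0 ≠ 0 := by rw [hf0]; norm_num
    have hlog := (hfd.log hfne).div_const (Real.log 2)
    have hmain := hlog.neg
    have hEq : (fun p => gallagerE0 P p γ) = fun p => -(Real.log (f p) / Real.log 2) := by
      funext p
      rw [gallagerE0, Real.logb, hf]
    rw [hEq]
    refine HasDerivAt.congr_deriv hmain ?_
    rw [hderivval, hf0]
    field_simp
    ring
  refine ⟨hE, ?_⟩
  -- nonnegativity
  have hsum_le : (∑ y : 𝒴, P 0 y ^ (γ / (1 + γ)) * P 1 y ^ ((1 : ℝ) / (1 + γ))) ≤ 1 := by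
    have hle : ∀ y : 𝒴, P 0 y ^ (γ / (1 + γ)) * P 1 y ^ ((1 : ℝ) / (1 + γ))
        ≤ γ / (1 + γ) * P 0 y + 1 / (1 + γ) * P 1 y := by
      intro y
      exact Real.geom_mean_le_arith_mean2_weighted (by positivity) (by positivity)
        (hPpos 0 y).le (hPpos 1 y).le
        (by rw [← add_div, add_comm, div_self h1γ.ne'])
    calc (∑ y : 𝒴, P 0 y ^ (γ / (1 + γ)) * P 1 y ^ ((1 : ℝ) / (1 + γ)))
        ≤ ∑ y : 𝒴, (γ / (1 + γ) * P 0 y + 1 / (1 + γ) * P 1 y) :=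
          Finset.sum_le_sum (fun y _ => hle y)
      _ = 1 := by
          rw [Finset.sum_add_distrib, ← Finset.mul_sum, ← Finset.mul_sum, hPsum 0, hPsum 1,
            mul_one, mul_one, ← add_div, add_comm, div_self h1γ.ne']
  have hlog2 : 0 < Real.log 2 := Real.log_pos (by norm_num)
  have : 0 ≤ γ / Real.log 2 := by positivity
  nlinarith
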